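/- The sum of f(a,b,c,d)² over all integers a ≥ 1, b,c ≥ 0, d with ad − bc = 1 converges and equals 2 − π/2, where f(a,b,c,d) = √(a²+b²) + √(c²+d²) − √((a+c)²+(b+d)²). -/

import Mathlib

open Real

/-- The triangle-inequality defect `f(a,b,c,d)`. -/
noncomputable def f (a b c d : ℤ) : ℝ :=
  Real.sqrt ((a : ℝ) ^ 2 + (b : ℝ) ^ 2) + Real.sqrt ((c : ℝ) ^ 2 + (d : ℝ) ^ 2) -
    Real.sqrt (((a : ℝ) + c) ^ 2 + ((b : ℝ) + d) ^ 2)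

@[ext] structure SBMat where
  a : ℤ
  b : ℤ
  c : ℤ
  d : ℤ

namespace SBMat

def left (m : SBMat) : SBMat := ⟨m.a, m.b, m.a + m.c, m.b + m.d⟩
def right (m : SBMat) : SBMat := ⟨m.a + m.c, m.b + m.d, m.c, m.d⟩

def Inv (m : SBMat) : Prop :=
  1 ≤ m.a ∧ 0 ≤ m.b ∧ 0 ≤ m.c ∧ 1 ≤ m.d ∧ m.a * m.d - m.b * m.c = 1

def nd : List Bool → SBMat
  | [] => ⟨1, 0, 0, 1⟩
  | true :: w => left (nd w)
  | false :: w => right (nd w)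

lemma inv_left {m : SBMat} (h : Inv m) : Inv (left m) := by
  obtain ⟨h1, h2, h3, h4, h5⟩ := h
  refine ⟨h1, h2, by dsimp [left]; omega, by dsimp [left]; omega, ?_⟩
  dsimp [left]; linear_combination h5

lemma inv_right {m : SBMat} (h : Inv m) : Inv (right m) := by
  obtain ⟨h1, h2, h3, h4, h5⟩ := h
  refine ⟨by dsimp [right]; omega, by dsimp [right]; omega, h3, h4, ?_⟩
  dsimp [right]; linear_combination h5

lemma inv_nd (w : List Bool) : Inv (nd w) := by
  induction w with
  | nil => exact ⟨le_refl _, le_refl _, le_refl _, le_refl _, by decide⟩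
  | cons x w ih => cases x <;> simp only [nd] <;> [exact inv_right ih; exact inv_left ih]

lemma nd_injective : Function.Injective nd := by
  intro w1 w2 h
  induction w1 generalizing w2 with
  | nil =>
    cases w2 with
    | nil => rfl
    | cons x v =>
      obtain ⟨i1, i2, i3, i4, i5⟩ := inv_nd v
      exfalso; cases x <;>
        simp only [nd, left, right, SBMat.mk.injEq] at h <;> omega
  | cons x w1 ih =>
    obtain ⟨i1, i2, i3, i4, i5⟩ := inv_nd w1
    cases w2 with
    | nil =>
      obtain rfl | rfl := Bool.eq_false_or_eq_true x <;>
        · exfalso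
          simp only [nd, left, right, SBMat.mk.injEq] at h; omega
    | cons y v =>
      obtain ⟨j1, j2, j3, j4, j5⟩ := inv_nd v
      obtain rfl | rfl := Bool.eq_false_or_eq_true x <;>
          obtain rfl | rfl := Bool.eq_false_or_eq_true y <;>
          simp only [nd, left, right, SBMat.mk.injEq] at h
      · rw [ih (show nd w1 = nd v by ext <;> omega)]
      · exfalso; omega
      · exfalso; omega
      · rw [ih (show nd w1 = nd v by ext <;> omega)]

lemma nd_surjective {m : SBMat} (h : Inv m) : ∃ w, nd w = m := by
  obtain ⟨n, hn⟩ : ∃ n : ℕ, (m.b + m.c).toNat ≤ n := ⟨_, le_refl _⟩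
  induction n generalizing m with
  | zero =>
    obtain ⟨h1, h2, h3, h4, h5⟩ := h
    have hb : m.b = 0 := by omega
    have hc : m.c = 0 := by omega
    have ha : m.a = 1 := by nlinarith
    have hd : m.d = 1 := by nlinarith
    exact ⟨[], by ext <;> simp [nd, ha, hb, hc, hd]⟩
  | succ n ih =>
    obtain ⟨h1, h2, h3, h4, h5⟩ := h
    by_cases hbc : m.b = 0 ∧ m.c = 0
    · have ha : m.a = 1 := by nlinarith
      have hd : m.d = 1 := by nlinarith
      exact ⟨[], by ext <;> simp [nd, ha, hbc.1, hbc.2, hd]⟩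
    · by_cases hac : m.a ≤ m.c
      · -- left child of p
        have hbd : m.b < m.d := by nlinarith
        set p : SBMat := ⟨m.a, m.b, m.c - m.a, m.d - m.b⟩ with hp
        have hInv : Inv p := ⟨h1, h2, by simp [hp]; omega, by simp [hp]; omega,
          by simp [hp]; linear_combination h5⟩
        obtain ⟨w, hw⟩ := ih hInv (by simp [hp]; omega)
        exact ⟨true :: w, by simp only [nd, hw, left, hp]; ext <;> simp <;> ring⟩
      · -- right child
        have hbc' : 1 ≤ m.b + m.c := by omega
        have hbd : m.d ≤ m.b := by
          by_contra hlt
          push_neg at hlt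
          nlinarith [mul_le_mul (show m.c + 1 ≤ m.a by omega)
            (show m.b + 1 ≤ m.d by omega) (by omega : (0:ℤ) ≤ m.b + 1) (by omega : (0:ℤ) ≤ m.a)]
        set p : SBMat := ⟨m.a - m.c, m.b - m.d, m.c, m.d⟩ with hp
        have hInv : Inv p := ⟨by simp [hp]; omega, by simp [hp]; omega, h3, h4,
          by simp [hp]; linear_combination h5⟩
        obtain ⟨w, hw⟩ := ih hInv (by simp [hp]; omega)
        exact ⟨false :: w, by simp only [nd, hw, right, hp]; ext <;> simp <;> ring⟩


noncomputable def PP (m : SBMat) : ℝ := Real.sqrt ((m.a:ℝ)^2 + (m.b:ℝ)^2)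
noncomputable def QQ (m : SBMat) : ℝ := Real.sqrt ((m.c:ℝ)^2 + (m.d:ℝ)^2)
noncomputable def uv (m : SBMat) : ℝ := (m.a:ℝ)*(m.c:ℝ) + (m.b:ℝ)*(m.d:ℝ)
noncomputable def tv (m : SBMat) : ℝ := PP m * QQ m - uv m
noncomputable def th (m : SBMat) : ℝ :=
  (π/2 - arctan ((m.c:ℝ)/(m.d:ℝ))) - arctan ((m.b:ℝ)/(m.a:ℝ))

section
variable {m : SBMat}

lemma castb (h : Inv m) : (1:ℝ) ≤ (m.a:ℝ) ∧ (0:ℝ) ≤ (m.b:ℝ) ∧ (0:ℝ) ≤ (m.c:ℝ) ∧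
    (1:ℝ) ≤ (m.d:ℝ) ∧ (m.a:ℝ)*(m.d:ℝ) - (m.b:ℝ)*(m.c:ℝ) = 1 := by
  obtain ⟨h1,h2,h3,h4,h5⟩ := h
  refine ⟨by exact_mod_cast h1, by exact_mod_cast h2, by exact_mod_cast h3,
    by exact_mod_cast h4, by exact_mod_cast h5⟩

lemma one_le_PP (h : Inv m) : 1 ≤ PP m := by
  obtain ⟨h1,h2,-,-,-⟩ := castb h
  have : Real.sqrt 1 ≤ PP m := Real.sqrt_le_sqrt (by nlinarith)
  rwa [Real.sqrt_one] at this

lemma one_le_QQ (h : Inv m) : 1 ≤ QQ m := by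
  obtain ⟨-,-,h3,h4,-⟩ := castb h
  have : Real.sqrt 1 ≤ QQ m := Real.sqrt_le_sqrt (by nlinarith)
  rwa [Real.sqrt_one] at this

lemma uv_nonneg (h : Inv m) : 0 ≤ uv m := by
  obtain ⟨h1,h2,h3,h4,-⟩ := castb h
  unfold uv; nlinarith

lemma sq_PQ (h : Inv m) : (PP m * QQ m)^2 = uv m ^ 2 + 1 := by
  obtain ⟨-,-,-,-,h5⟩ := castb h
  have hP : PP m ^ 2 = (m.a:ℝ)^2 + (m.b:ℝ)^2 := Real.sq_sqrt (by positivity)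
  have hQ : QQ m ^ 2 = (m.c:ℝ)^2 + (m.d:ℝ)^2 := Real.sq_sqrt (by positivity)
  calc (PP m * QQ m)^2 = PP m ^2 * QQ m ^2 := by ring
    _ = ((m.a:ℝ)^2 + (m.b:ℝ)^2) * ((m.c:ℝ)^2 + (m.d:ℝ)^2) := by rw [hP, hQ]
    _ = uv m ^2 + ((m.a:ℝ)*(m.d:ℝ) - (m.b:ℝ)*(m.c:ℝ))^2 := by unfold uv; ring
    _ = uv m ^2 + 1 := by rw [h5]; norm_num

lemma PQuv_pos (h : Inv m) : 0 < PP m * QQ m + uv m := by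
  have := one_le_PP h; have := one_le_QQ h; have := uv_nonneg h; nlinarith

lemma tv_eq (h : Inv m) : tv m = 1 / (PP m * QQ m + uv m) := by
  have hpos := PQuv_pos h
  rw [eq_div_iff hpos.ne']
  unfold tv
  linear_combination sq_PQ h

lemma tv_pos (h : Inv m) : 0 < tv m := by
  rw [tv_eq h]; exact div_pos one_pos (PQuv_pos h)

lemma tv_le (h : Inv m) : tv m * (((m.a:ℝ)+m.b) * ((m.c:ℝ)+m.d)) ≤ 2 := by
  obtain ⟨h1,h2,h3,h4,-⟩ := castb h
  have hP : PP m ^ 2 = (m.a:ℝ)^2 + (m.b:ℝ)^2 := Real.sq_sqrt (by positivity)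
  have hQ : QQ m ^ 2 = (m.c:ℝ)^2 + (m.d:ℝ)^2 := Real.sq_sqrt (by positivity)
  have hX0 : 0 ≤ ((m.a:ℝ)+m.b) * ((m.c:ℝ)+m.d) := by nlinarith
  have hsq : (((m.a:ℝ)+m.b) * ((m.c:ℝ)+m.d))^2 ≤ (2 * (PP m * QQ m))^2 := by
    have e : (2 * (PP m * QQ m))^2 = 4 * (PP m ^2 * QQ m ^2) := by ring
    rw [e, hP, hQ]
    nlinarith [sq_nonneg ((m.a:ℝ) - m.b), sq_nonneg ((m.c:ℝ) - m.d),
      sq_nonneg (((m.a:ℝ) - m.b) * ((m.c:ℝ) - m.d)),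
      sq_nonneg (((m.a:ℝ) - m.b) * ((m.c:ℝ) + m.d)),
      sq_nonneg (((m.a:ℝ) + m.b) * ((m.c:ℝ) - m.d))]
  have hPQ : 0 < PP m * QQ m := by nlinarith [one_le_PP h, one_le_QQ h]
  have hXle : ((m.a:ℝ)+m.b) * ((m.c:ℝ)+m.d) ≤ 2 * (PP m * QQ m) := by
    nlinarith
  have htv := tv_eq h
  have hpos := PQuv_pos h
  have huv := uv_nonneg h
  rw [htv]
  rw [div_mul_eq_mul_div, div_le_iff₀ hpos]
  nlinarith

lemma fsq (h : Inv m) : f m.a m.b m.c m.d ^ 2 = 2*tv m - 2*tv (left m) - 2*tv (right m) := by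
  have hP : PP m ^ 2 = (m.a:ℝ)^2 + (m.b:ℝ)^2 := Real.sq_sqrt (by positivity)
  have hQ : QQ m ^ 2 = (m.c:ℝ)^2 + (m.d:ℝ)^2 := Real.sq_sqrt (by positivity)
  have hR : QQ (left m) ^ 2 = ((m.a:ℝ)+m.c)^2 + ((m.b:ℝ)+m.d)^2 := by
    have : QQ (left m) = Real.sqrt (((m.a:ℝ)+m.c)^2 + ((m.b:ℝ)+m.d)^2) := by
      simp only [QQ, left]; push_cast; ring_nf
    rw [this]; exact Real.sq_sqrt (by positivity)
  have e3 : Real.sqrt (((m.a:ℝ) + m.c)^2 + ((m.b:ℝ) + m.d)^2) = QQ (left m) := by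
    simp only [QQ, left]; push_cast; ring_nf
  have hPL : PP (left m) = PP m := rfl
  have hQR : QQ (right m) = QQ m := rfl
  have hPR : PP (right m) = QQ (left m) := by
    simp only [PP, QQ, left, right]
  have hul : uv (left m) = (m.a:ℝ)*((m.a:ℝ)+m.c) + (m.b:ℝ)*((m.b:ℝ)+m.d) := by
    simp only [uv, left]; push_cast; ring
  have hur : uv (right m) = ((m.a:ℝ)+m.c)*m.c + ((m.b:ℝ)+m.d)*m.d := by
    simp only [uv, right]; push_cast; ring
  have hum : uv m = (m.a:ℝ)*m.c + (m.b:ℝ)*m.d := rfl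
  unfold f
  rw [show Real.sqrt ((m.a:ℝ)^2+(m.b:ℝ)^2) = PP m from rfl,
    show Real.sqrt ((m.c:ℝ)^2+(m.d:ℝ)^2) = QQ m from rfl, e3]
  unfold tv
  rw [hPL, hQR, hPR, hul, hur, hum]
  linear_combination hP + hQ + hR

lemma arctan_nonneg' {t : ℝ} (ht : 0 ≤ t) : 0 ≤ arctan t := by
  rw [show (0:ℝ) = arctan 0 from (Real.arctan_zero).symm]
  exact Real.arctan_strictMono.monotone ht

lemma th_split (h : Inv m) : th m = th (left m) + th (right m) := by
  obtain ⟨h1,h2,h3,h4,-⟩ := castb h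
  have hx : (0:ℝ) < ((m.a:ℝ)+m.c)/((m.b:ℝ)+m.d) := by positivity
  have key := Real.arctan_inv_of_pos hx
  rw [inv_div] at key
  simp only [th, left, right]
  push_cast
  linarith [key]

lemma th_eq (h : Inv m) : th m = 2 * arctan (tv m) := by
  obtain ⟨h1,h2,h3,h4,h5⟩ := castb h
  have ha0 : (0:ℝ) < m.a := by linarith
  have hd0 : (0:ℝ) < m.d := by linarith
  have hP1 := one_le_PP h; have hQ1 := one_le_QQ h
  have hPQ : (0:ℝ) < PP m * QQ m := by nlinarith
  set x := arctan ((m.c:ℝ)/(m.d:ℝ)) with hxdef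
  set y := arctan ((m.b:ℝ)/(m.a:ℝ)) with hydef
  have hx0 : 0 ≤ x := arctan_nonneg' (by positivity)
  have hy0 : 0 ≤ y := arctan_nonneg' (by positivity)
  have hx2 : x < π/2 := Real.arctan_lt_pi_div_two _
  have hy2 : y < π/2 := Real.arctan_lt_pi_div_two _
  have hth : th m = π/2 - (x + y) := by unfold th; ring
  have s1 : Real.sqrt (1+((m.c:ℝ)/m.d)^2) = QQ m / m.d := by
    rw [show (1:ℝ)+((m.c:ℝ)/m.d)^2 = ((m.c:ℝ)^2+(m.d:ℝ)^2)/(m.d:ℝ)^2 by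
      field_simp
      all_goals ring]
    rw [Real.sqrt_div (by positivity), Real.sqrt_sq hd0.le]
    all_goals rfl
  have s2 : Real.sqrt (1+((m.b:ℝ)/m.a)^2) = PP m / m.a := by
    rw [show (1:ℝ)+((m.b:ℝ)/m.a)^2 = ((m.a:ℝ)^2+(m.b:ℝ)^2)/(m.a:ℝ)^2 by
      field_simp
      all_goals ring]
    rw [Real.sqrt_div (by positivity), Real.sqrt_sq ha0.le]
    all_goals rfl
  have hPne : PP m ≠ 0 := by positivity
  have hQne : QQ m ≠ 0 := by positivity
  have hsin : Real.sin (th m) = 1 / (PP m * QQ m) := by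
    rw [hth, Real.sin_pi_div_two_sub, Real.cos_add, hxdef, hydef,
      Real.cos_arctan, Real.sin_arctan, Real.cos_arctan, Real.sin_arctan, s1, s2]
    field_simp
    linear_combination h5
  have hcos : Real.cos (th m) = uv m / (PP m * QQ m) := by
    rw [hth, Real.cos_pi_div_two_sub, Real.sin_add, hxdef, hydef,
      Real.cos_arctan, Real.sin_arctan, Real.cos_arctan, Real.sin_arctan, s1, s2]
    unfold uv
    field_simp
  have hcpos : 0 < Real.cos (th m / 2) := by
    apply Real.cos_pos_of_mem_Ioo
    constructor <;> [linarith [pi_pos]; linarith [pi_pos]]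
  have e2 : 2 * Real.sin (th m/2) * Real.cos (th m/2) * (PP m * QQ m) = 1 := by
    have : Real.sin (th m) = 2 * Real.sin (th m/2) * Real.cos (th m/2) := by
      rw [show th m = 2 * (th m / 2) by ring, Real.sin_two_mul]; ring_nf
    rw [← this, hsin]; field_simp
  have e3 : 2 * Real.cos (th m/2)^2 * (PP m * QQ m) = PP m * QQ m + uv m := by
    have hcs := Real.cos_sq (th m / 2)
    rw [show 2 * (th m / 2) = th m by ring, hcos] at hcs
    field_simp at hcs
    linear_combination hcs
  have hpos := PQuv_pos h
  have htan : Real.tan (th m / 2) = tv m := by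
    rw [Real.tan_eq_sin_div_cos, tv_eq h, div_eq_div_iff hcpos.ne' hpos.ne']
    linear_combination Real.cos (th m/2) * e2 - Real.sin (th m/2) * e3
  have harct := Real.arctan_tan (x := th m / 2) (by linarith) (by linarith)
  rw [htan] at harct
  linarith

end

lemma self_sub_arctan_nonneg {t : ℝ} (ht : 0 ≤ t) : 0 ≤ t - arctan t := by
  have hmono : MonotoneOn (fun s : ℝ => s - arctan s) (Set.Ici 0) := by
    apply monotoneOn_of_deriv_nonneg (convex_Ici 0)
    · exact (continuous_id.sub Real.continuous_arctan).continuousOn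
    · exact (differentiable_id.sub Real.differentiable_arctan).differentiableOn
    · intro s _
      have hd : HasDerivAt (fun s : ℝ => s - arctan s) (1 - 1/(1+s^2)) s :=
        (hasDerivAt_id s).sub (Real.hasDerivAt_arctan s)
      rw [hd.deriv]
      have : (0:ℝ) < 1 + s^2 := by positivity
      rw [sub_nonneg, div_le_one this]
      nlinarith
  have h0 : (0:ℝ) - arctan 0 = 0 := by simp
  have := hmono (Set.self_mem_Ici) (Set.mem_Ici.mpr ht) ht
  simpa [h0] using this

lemma self_sub_arctan_le_cube {t : ℝ} (ht : 0 ≤ t) : t - arctan t ≤ t^3 := by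
  have hmono : MonotoneOn (fun s : ℝ => s^3 - (s - arctan s)) (Set.Ici 0) := by
    apply monotoneOn_of_deriv_nonneg (convex_Ici 0)
    · exact ((continuous_pow 3).sub (continuous_id.sub Real.continuous_arctan)).continuousOn
    · exact ((differentiable_pow 3).sub
        (differentiable_id.sub Real.differentiable_arctan)).differentiableOn
    · intro s hs
      have hs' : (0:ℝ) ≤ s := le_of_lt (by rwa [interior_Ici, Set.mem_Ioi] at hs)
      have hd : HasDerivAt (fun s : ℝ => s^3 - (s - arctan s))
          (3*s^2 - (1 - 1/(1+s^2))) s := by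
        have h1 : HasDerivAt (fun s : ℝ => s^3) (3*s^2) s := by
          simpa using hasDerivAt_pow 3 s
        exact h1.sub ((hasDerivAt_id s).sub (Real.hasDerivAt_arctan s))
      rw [hd.deriv]
      have hp : (0:ℝ) < 1 + s^2 := by positivity
      have : 1 - 1/(1+s^2) ≤ s^2 := by
        have key : 1/(1+s^2) * (1+s^2) = 1 := by field_simp
        nlinarith [sq_nonneg s, div_pos one_pos hp, sq_nonneg (s * (1/(1+s^2)))]
      nlinarith
  have h0 : (0:ℝ)^3 - ((0:ℝ) - arctan 0) = 0 := by simp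
  have := hmono (Set.self_mem_Ici) (Set.mem_Ici.mpr ht) ht
  simp only [h0] at this
  linarith [this]

end SBMat

namespace SBMat

def lev : ℕ → Finset (List Bool)
  | 0 => {[]}
  | n+1 => ((lev n).image (List.cons true)) ∪ ((lev n).image (List.cons false))

lemma length_of_mem_lev : ∀ {n w}, w ∈ lev n → w.length = n := by
  intro n
  induction n with
  | zero => intro w hw; simp [lev] at hw; simp [hw]
  | succ n ih =>
    intro w hw
    simp only [lev, Finset.mem_union, Finset.mem_image] at hw
    rcases hw with ⟨v, hv, rfl⟩ | ⟨v, hv, rfl⟩ <;> simp [ih hv]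

lemma self_mem_lev : ∀ w : List Bool, w ∈ lev w.length := by
  intro w
  induction w with
  | nil => simp [lev]
  | cons x w ih =>
    cases x <;> simp only [List.length_cons, lev, Finset.mem_union, Finset.mem_image]
    · exact Or.inr ⟨w, ih, rfl⟩
    · exact Or.inl ⟨w, ih, rfl⟩

lemma sum_lev_succ (g : List Bool → ℝ) (n : ℕ) :
    ∑ w ∈ lev (n+1), g w = ∑ w ∈ lev n, (g (true :: w) + g (false :: w)) := by
  have hdisj : Disjoint ((lev n).image (List.cons true)) ((lev n).image (List.cons false)) := by
    rw [Finset.disjoint_left]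
    rintro x hx hy
    simp only [Finset.mem_image] at hx hy
    obtain ⟨v, -, rfl⟩ := hx
    obtain ⟨u, -, h⟩ := hy
    simp at h
  rw [show lev (n+1) = ((lev n).image (List.cons true)) ∪ ((lev n).image (List.cons false))
      from rfl,
    Finset.sum_union hdisj,
    Finset.sum_image (by intro a _ b _ h; simpa using h),
    Finset.sum_image (by intro a _ b _ h; simpa using h),
    ← Finset.sum_add_distrib]

noncomputable def A (n : ℕ) : ℝ := ∑ w ∈ lev n, 2 * tv (nd w)

noncomputable def G (w : List Bool) : ℝ := f (nd w).a (nd w).b (nd w).c (nd w).d ^ 2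

lemma A_zero : A 0 = 2 := by
  simp only [A, lev, Finset.sum_singleton, nd, tv, PP, QQ, uv]
  norm_num

lemma Th_pi : ∀ n : ℕ, ∑ w ∈ lev n, th (nd w) = π/2 := by
  intro n
  induction n with
  | zero =>
    simp only [lev, Finset.sum_singleton, nd, th]
    norm_num
  | succ n ih =>
    rw [sum_lev_succ, ← ih]
    apply Finset.sum_congr rfl
    intro w _
    have := th_split (inv_nd w)
    rw [show nd (true :: w) = left (nd w) from rfl, show nd (false :: w) = right (nd w) from rfl]
    linarith

lemma sum_G_lev (n : ℕ) : ∑ w ∈ lev n, G w = A n - A (n+1) := by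
  rw [A, A, sum_lev_succ]
  rw [← Finset.sum_sub_distrib]
  apply Finset.sum_congr rfl
  intro w _
  have := fsq (inv_nd w)
  rw [G, this]
  rw [show nd (true :: w) = left (nd w) from rfl, show nd (false :: w) = right (nd w) from rfl]
  ring

lemma A_le_two : ∀ n, A n ≤ 2 := by
  intro n
  induction n with
  | zero => rw [A_zero]
  | succ n ih =>
    have h := sum_G_lev n
    have hnn : 0 ≤ ∑ w ∈ lev n, G w :=
      Finset.sum_nonneg fun w _ => sq_nonneg _
    linarith

lemma pi_le_A (n : ℕ) : π/2 ≤ A n := by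
  rw [← Th_pi n, A]
  apply Finset.sum_le_sum
  intro w _
  have hinv := inv_nd w
  have htv := tv_pos hinv
  rw [th_eq hinv]
  have := self_sub_arctan_nonneg htv.le
  linarith

lemma len_le_sum (w : List Bool) :
    (w.length : ℤ) + 2 ≤ ((nd w).a + (nd w).b) + ((nd w).c + (nd w).d) := by
  induction w with
  | nil => simp [nd]
  | cons x w ih =>
    obtain ⟨h1, h2, h3, h4, -⟩ := inv_nd w
    cases x <;> simp only [nd, left, right, List.length_cons] <;> push_cast <;> omega

lemma tv_bound {w : List Bool} : tv (nd w) * ((w.length : ℝ) + 1) ≤ 2 := by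
  have hinv := inv_nd w
  have htv := tv_pos hinv
  have hle := tv_le hinv
  obtain ⟨h1, h2, h3, h4, -⟩ := castb hinv
  have hX : (w.length : ℝ) + 1 ≤ (((nd w).a:ℝ) + (nd w).b) * (((nd w).c:ℝ) + (nd w).d) := by
    have hs := len_le_sum w
    have hs' : (w.length : ℝ) + 2 ≤ (((nd w).a:ℝ) + (nd w).b) + (((nd w).c:ℝ) + (nd w).d) := by
      exact_mod_cast hs
    nlinarith
  nlinarith

lemma A_le (n : ℕ) : A n ≤ π/2 + 8/((n:ℝ)+1)^2 := by
  have key : A n - π/2 ≤ (4/((n:ℝ)+1)^2) * A n := by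
    rw [← Th_pi n, A, ← Finset.sum_sub_distrib]
    have : (4/((n:ℝ)+1)^2) * (∑ w ∈ lev n, 2 * tv (nd w)) =
        ∑ w ∈ lev n, (4/((n:ℝ)+1)^2) * (2 * tv (nd w)) := by
      rw [Finset.mul_sum]
    rw [this]
    apply Finset.sum_le_sum
    intro w hw
    have hinv := inv_nd w
    have htv := tv_pos hinv
    have hlen : w.length = n := length_of_mem_lev hw
    have hb : tv (nd w) * ((n : ℝ) + 1) ≤ 2 := by rw [← hlen]; exact tv_bound
    have hn1 : (0:ℝ) < (n:ℝ) + 1 := by positivity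
    have htvle : tv (nd w) ≤ 2 / ((n:ℝ)+1) := by
      rw [le_div_iff₀ hn1]; exact hb
    have hcube := self_sub_arctan_le_cube htv.le
    rw [th_eq hinv]
    have hsq : tv (nd w)^2 ≤ 4 / ((n:ℝ)+1)^2 := by
      have := mul_le_mul htvle htvle htv.le (by positivity)
      calc tv (nd w)^2 = tv (nd w) * tv (nd w) := sq (tv (nd w)) ▸ by ring
        _ ≤ (2/((n:ℝ)+1)) * (2/((n:ℝ)+1)) := this
        _ = 4 / ((n:ℝ)+1)^2 := by
            rw [div_mul_div_comm]; congr 1 <;> ring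
    calc 2 * tv (nd w) - 2 * arctan (tv (nd w)) ≤ 2 * tv (nd w)^3 := by linarith
      _ = (tv (nd w)^2) * (2 * tv (nd w)) := by ring
      _ ≤ (4/((n:ℝ)+1)^2) * (2 * tv (nd w)) := by
          apply mul_le_mul_of_nonneg_right hsq (by linarith)
  have h2 := A_le_two n
  have hpos : (0:ℝ) < ((n:ℝ)+1)^2 := by positivity
  have : (4/((n:ℝ)+1)^2) * A n ≤ 8/((n:ℝ)+1)^2 := by
    rw [div_mul_eq_mul_div, div_le_div_iff₀ hpos hpos]
    nlinarith
  linarith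

lemma A_tendsto : Filter.Tendsto A Filter.atTop (nhds (π/2)) := by
  have h8 : Filter.Tendsto (fun n : ℕ => 8/((n:ℝ)+1)^2) Filter.atTop (nhds 0) := by
    have h1 : Filter.Tendsto (fun n : ℕ => 1/((n:ℝ)+1)) Filter.atTop (nhds 0) :=
      tendsto_one_div_add_atTop_nhds_zero_nat
    have := (h1.mul h1).const_mul (8:ℝ)
    simp only [mul_zero] at this
    apply this.congr
    intro n
    field_simp
  have hub : Filter.Tendsto (fun n : ℕ => π/2 + 8/((n:ℝ)+1)^2) Filter.atTop (nhds (π/2)) := by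
    have := (tendsto_const_nhds (x := π/2) (f := Filter.atTop (α := ℕ))).add h8
    simpa using this
  exact tendsto_of_tendsto_of_tendsto_of_le_of_le tendsto_const_nhds hub
    (fun n => pi_le_A n) (fun n => A_le n)

def ball (n : ℕ) : Finset (List Bool) := (Finset.range (n+1)).biUnion lev

lemma sum_G_ball (n : ℕ) : ∑ w ∈ ball n, G w = 2 - A (n+1) := by
  rw [ball, Finset.sum_biUnion]
  · have : ∀ k ∈ Finset.range (n+1), ∑ w ∈ lev k, G w = A k - A (k+1) :=
      fun k _ => sum_G_lev k
    rw [Finset.sum_congr rfl this, Finset.sum_range_sub' A, A_zero]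
  · intro i _ j _ hij
    simp only [Function.onFun]
    rw [Finset.disjoint_left]
    intro w hwi hwj
    exact hij ((length_of_mem_lev hwi).symm.trans (length_of_mem_lev hwj))

lemma mem_ball {w : List Bool} {n : ℕ} (h : w.length ≤ n) : w ∈ ball n := by
  rw [ball, Finset.mem_biUnion]
  exact ⟨w.length, Finset.mem_range.mpr (by omega), self_mem_lev w⟩

lemma hasSum_G : HasSum G (2 - π/2) := by
  apply hasSum_of_isLUB_of_nonneg
  · intro w; exact sq_nonneg _
  constructor
  · rintro r ⟨s, rfl⟩
    have hsub : s ⊆ ball (s.sup List.length) := fun w hw => mem_ball (Finset.le_sup hw)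
    calc ∑ w ∈ s, G w ≤ ∑ w ∈ ball (s.sup List.length), G w :=
          Finset.sum_le_sum_of_subset_of_nonneg hsub (fun w _ _ => sq_nonneg _)
      _ = 2 - A (s.sup List.length + 1) := sum_G_ball _
      _ ≤ 2 - π/2 := by linarith [pi_le_A (s.sup List.length + 1)]
  · intro b hb
    have hball : ∀ n : ℕ, 2 - A (n+1) ≤ b := by
      intro n
      rw [← sum_G_ball n]
      exact hb ⟨ball n, rfl⟩
    have htend : Filter.Tendsto (fun n : ℕ => 2 - A (n+1)) Filter.atTop (nhds (2 - π/2)) := by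
      have hA1 : Filter.Tendsto (fun n : ℕ => A (n+1)) Filter.atTop (nhds (π/2)) :=
        A_tendsto.comp (Filter.tendsto_add_atTop_nat 1)
      exact tendsto_const_nhds.sub hA1
    exact le_of_tendsto htend (Filter.Eventually.of_forall hball)

end SBMat

theorem sum_f_sq_eq :
    HasSum (fun x : {x : ℤ × ℤ × ℤ × ℤ //
        1 ≤ x.1 ∧ 0 ≤ x.2.1 ∧ 0 ≤ x.2.2.1 ∧ x.1 * x.2.2.2 - x.2.1 * x.2.2.1 = 1} =>
      (f x.val.1 x.val.2.1 x.val.2.2.1 x.val.2.2.2) ^ 2) (2 - Real.pi / 2) := by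
  classical
  set Sub := {x : ℤ × ℤ × ℤ × ℤ //
      1 ≤ x.1 ∧ 0 ≤ x.2.1 ∧ 0 ≤ x.2.2.1 ∧ x.1 * x.2.2.2 - x.2.1 * x.2.2.1 = 1} with hSub
  have hmem : ∀ w : List Bool,
      1 ≤ (SBMat.nd w).a ∧ 0 ≤ (SBMat.nd w).b ∧ 0 ≤ (SBMat.nd w).c ∧
        (SBMat.nd w).a * (SBMat.nd w).d - (SBMat.nd w).b * (SBMat.nd w).c = 1 := by
    intro w
    obtain ⟨h1, h2, h3, h4, h5⟩ := SBMat.inv_nd w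
    exact ⟨h1, h2, h3, h5⟩
  let e : List Bool → Sub := fun w =>
    ⟨((SBMat.nd w).a, (SBMat.nd w).b, (SBMat.nd w).c, (SBMat.nd w).d), hmem w⟩
  have hinj : Function.Injective e := by
    intro w1 w2 h
    apply SBMat.nd_injective
    have hv := Subtype.ext_iff.mp h
    simp only [e, Prod.mk.injEq] at hv
    ext <;> tauto
  have hsurj : Function.Surjective e := by
    rintro ⟨⟨a, b, c, d⟩, ⟨p1, p2, p3, p4⟩⟩
    simp only at p1 p2 p3 p4
    have hd : 1 ≤ d := by
      nlinarith [mul_nonneg p2 p3]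
    obtain ⟨w, hw⟩ := SBMat.nd_surjective (m := ⟨a, b, c, d⟩) ⟨p1, p2, p3, hd, p4⟩
    refine ⟨w, ?_⟩
    apply Subtype.ext
    simp only [e, hw]
  have hbij : Function.Bijective e := ⟨hinj, hsurj⟩
  have key := ((Equiv.ofBijective e hbij).hasSum_iff
    (f := fun x : Sub => (f x.val.1 x.val.2.1 x.val.2.2.1 x.val.2.2.2) ^ 2)
    (a := 2 - Real.pi / 2)).mp
  apply key
  exact SBMat.hasSum_G
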